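/- Suppose coefficients ψ_{m,j} satisfy |ψ_{m,j}| <= C(2m+4, j) M r_1^{-m} for all m >= 0, 0 <= j <= 2m+4, and define transformed coefficients ψ^t_{m,n} = ∑_{j=0}^{2m+4} sqrt(C(2m+4,n)/C(2m+4,j)) T^j_n ψ_{m,j} where the complex numbers T^j_n satisfy |T^j_n| <= 1. Then |ψ^t_{m,n}| <= C(2m+4, n) * (16 M) * (r_1/4)^{-m} for all m >= 0, 0 <= n <= 2m+4. -/
import Mathlib


theorem stmt_18 (M r₁ : ℝ) (hM : 0 < M) (hr₁ : 0 < r₁)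
    (ψ : ℕ → ℕ → ℂ) (T : ℕ → ℕ → ℕ → ℂ)
    (hψ : ∀ m j : ℕ, j ≤ 2 * m + 4 →
      ‖ψ m j‖ ≤ ((2 * m + 4).choose j : ℝ) * M / r₁ ^ m)
    (hT : ∀ m j n : ℕ, ‖T m j n‖ ≤ 1) :
    ∀ m n : ℕ, n ≤ 2 * m + 4 →
      ‖∑ j ∈ Finset.range (2 * m + 5),
          ((Real.sqrt ((2 * m + 4).choose n) / Real.sqrt ((2 * m + 4).choose j) : ℝ) : ℂ)
            * T m j n * ψ m j‖
        ≤ ((2 * m + 4).choose n : ℝ) * (16 * M) / (r₁ / 4) ^ m := by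
  intro m n hn
  have hCn1 : (1 : ℝ) ≤ ((2 * m + 4).choose n : ℝ) := by
    exact_mod_cast Nat.choose_pos hn
  have key : ∀ j ∈ Finset.range (2 * m + 5),
      ‖((Real.sqrt ((2 * m + 4).choose n) / Real.sqrt ((2 * m + 4).choose j) : ℝ) : ℂ)
          * T m j n * ψ m j‖
        ≤ ((2 * m + 4).choose n : ℝ) * (((2 * m + 4).choose j : ℝ) * M / r₁ ^ m) := by
    intro j hj
    have hj' : j ≤ 2 * m + 4 := Nat.lt_succ_iff.mp (Finset.mem_range.mp hj)
    have hCj1 : (1 : ℝ) ≤ ((2 * m + 4).choose j : ℝ) := by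
      exact_mod_cast Nat.choose_pos hj'
    have hcoef : Real.sqrt ((2 * m + 4).choose n) / Real.sqrt ((2 * m + 4).choose j)
        ≤ ((2 * m + 4).choose n : ℝ) := by
      have h1 : Real.sqrt ((2 * m + 4).choose n) / Real.sqrt ((2 * m + 4).choose j)
          ≤ Real.sqrt ((2 * m + 4).choose n) := by
        apply div_le_self (Real.sqrt_nonneg _)
        rw [show (1:ℝ) = Real.sqrt 1 by simp]
        exact Real.sqrt_le_sqrt hCj1
      exact h1.trans (by
        calc Real.sqrt ((2 * m + 4).choose n) ≤ Real.sqrt (((2 * m + 4).choose n : ℝ)^2) :=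
              Real.sqrt_le_sqrt (by nlinarith)
          _ = ((2 * m + 4).choose n : ℝ) := Real.sqrt_sq (by positivity))
    have hcoefnn : 0 ≤ Real.sqrt ((2 * m + 4).choose n) / Real.sqrt ((2 * m + 4).choose j) :=
      div_nonneg (Real.sqrt_nonneg _) (Real.sqrt_nonneg _)
    have hψ' := hψ m j hj'
    have hψnn : (0:ℝ) ≤ ((2 * m + 4).choose j : ℝ) * M / r₁ ^ m := by positivity
    calc ‖((Real.sqrt ((2 * m + 4).choose n) / Real.sqrt ((2 * m + 4).choose j) : ℝ) : ℂ)
          * T m j n * ψ m j‖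
        = (Real.sqrt ((2 * m + 4).choose n) / Real.sqrt ((2 * m + 4).choose j))
            * ‖T m j n‖ * ‖ψ m j‖ := by
          rw [norm_mul, norm_mul, Complex.norm_real, Real.norm_of_nonneg hcoefnn]
      _ ≤ ((2 * m + 4).choose n : ℝ) * 1 * (((2 * m + 4).choose j : ℝ) * M / r₁ ^ m) := by
          gcongr
          exact hT m j n
      _ = ((2 * m + 4).choose n : ℝ) * (((2 * m + 4).choose j : ℝ) * M / r₁ ^ m) := by ring
  have hsum : ∑ j ∈ Finset.range (2 * m + 5), ((2 * m + 4).choose j : ℝ) = 2 ^ (2 * m + 4) := by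
    exact_mod_cast Nat.sum_range_choose (2 * m + 4)
  calc ‖∑ j ∈ Finset.range (2 * m + 5),
          ((Real.sqrt ((2 * m + 4).choose n) / Real.sqrt ((2 * m + 4).choose j) : ℝ) : ℂ)
            * T m j n * ψ m j‖
      ≤ ∑ j ∈ Finset.range (2 * m + 5),
          ((2 * m + 4).choose n : ℝ) * (((2 * m + 4).choose j : ℝ) * M / r₁ ^ m) :=
        (norm_sum_le _ _).trans (Finset.sum_le_sum key)
    _ = ((2 * m + 4).choose n : ℝ) * M / r₁ ^ m
          * ∑ j ∈ Finset.range (2 * m + 5), ((2 * m + 4).choose j : ℝ) := by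
        rw [Finset.mul_sum]; congr 1; ext j; ring
    _ = ((2 * m + 4).choose n : ℝ) * (16 * M) / (r₁ / 4) ^ m := by
        rw [hsum, div_pow, pow_add, pow_mul]
        field_simp
        ring
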